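/- arXiv:2007.05852 — 5 statements merged into one kernel-verified Lean document; each statement's English description precedes it below -/
import Mathlib

section
/- Let f₁, ..., f_m : 2^V → ℝ≥0 be monotone submodular functions, and let S* ⊆ V be any set of size l. Let S_tr^(0) = ∅ ⊆ S_tr^(1) ⊆ ... ⊆ S_tr^(l) be greedy iterates where at each step t the element e maximizing Σᵢ (fᵢ(S_tr^(t-1) ∪ {e}) - fᵢ(S_tr^(t-1))) is added. Then for any sets S₁*, ..., S_m* ⊆ V, Σᵢ fᵢ(S* ∪ Sᵢ*) - Σᵢ fᵢ(S_tr^(l)) ≤ Σᵢ fᵢ(S_tr^(l) ∪ Sᵢ*). -/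
open Finset

def Submodular {V : Type*} [DecidableEq V] (f : Finset V → ℝ) : Prop :=
  ∀ A B : Finset V, f (A ∪ B) + f (A ∩ B) ≤ f A + f B

def MonotoneSet {V : Type*} (f : Finset V → ℝ) : Prop :=
  ∀ A B : Finset V, A ⊆ B → f A ≤ f B

/-- Marginal gains are decreasing in the base set. -/
lemma marg_mono {V : Type*} [DecidableEq V] {g : Finset V → ℝ}
    (hs : Submodular g) (hm : MonotoneSet g) {A B : Finset V} (hAB : A ⊆ B) (e : V) :
    g (insert e B) - g B ≤ g (insert e A) - g A := by
  by_cases he : e ∈ B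
  · rw [Finset.insert_eq_self.2 he]
    have := hm A (insert e A) (Finset.subset_insert e A)
    linarith
  · have h := hs (insert e A) B
    have h1 : insert e A ∪ B = insert e B := by
      rw [Finset.insert_union, Finset.union_eq_right.2 hAB]
    have h2 : insert e A ∩ B = A := by
      ext x
      simp only [Finset.mem_inter, Finset.mem_insert]
      constructor
      · rintro ⟨h | h, hx⟩
        · exact absurd (h ▸ hx) he
        · exact h
      · intro hx; exact ⟨Or.inr hx, hAB hx⟩
    rw [h1, h2] at h
    linarith

/-- Expansion bound: `g (A ∪ B) ≤ g B + ∑_{e ∈ A} marginal of e at B`. -/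
lemma sum_marg_bound {V : Type*} [DecidableEq V] {g : Finset V → ℝ}
    (hs : Submodular g) (hm : MonotoneSet g) (A B : Finset V) :
    g (A ∪ B) ≤ g B + ∑ e ∈ A, (g (insert e B) - g B) := by
  induction A using Finset.induction_on with
  | empty => simp
  | @insert a A ha ih =>
    have h1 : insert a A ∪ B = insert a (A ∪ B) := Finset.insert_union a A B
    have h2 : g (insert a (A ∪ B)) - g (A ∪ B) ≤ g (insert a B) - g B :=
      marg_mono hs hm (Finset.subset_union_right) a
    rw [h1, Finset.sum_insert ha]
    linarith

/-- the key coupling inequality for the greedy sequence built on the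
sum of the `fᵢ`'s (equation (13) of the paper). -/
theorem greedy_sum_coupling {V : Type*} [Fintype V] [DecidableEq V] (m l : ℕ)
    (f : Fin m → Finset V → ℝ)
    (hnonneg : ∀ i S, 0 ≤ f i S)
    (hsub : ∀ i, Submodular (f i)) (hmono : ∀ i, MonotoneSet (f i))
    (Str : ℕ → Finset V) (h0 : Str 0 = ∅)
    (hstep : ∀ t < l, ∃ e, e ∉ Str t ∧ Str (t + 1) = insert e (Str t) ∧
      ∀ e', (∑ i, (f i (insert e' (Str t)) - f i (Str t))) ≤
        ∑ i, (f i (insert e (Str t)) - f i (Str t)))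
    (Sstar : Finset V) (hSstar : Sstar.card = l)
    (Sistar : Fin m → Finset V) :
    (∑ i, f i (Sstar ∪ Sistar i)) - (∑ i, f i (Str l)) ≤
      ∑ i, f i (Str l ∪ Sistar i) := by
  set g : Finset V → ℝ := fun S => ∑ i, f i S with hg
  have hgs : Submodular g := by
    intro A B
    simp only [hg]
    rw [← Finset.sum_add_distrib, ← Finset.sum_add_distrib]
    exact Finset.sum_le_sum fun i _ => hsub i A B
  have hgm : MonotoneSet g := fun A B h => Finset.sum_le_sum fun i _ => hmono i A B h
  have hgnn : ∀ S, 0 ≤ g S := fun S => Finset.sum_nonneg fun i _ => hnonneg i S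
  -- chain of subsets
  have hchain : ∀ t, t < l → Str t ⊆ Str (t + 1) := by
    intro t ht
    obtain ⟨e, -, he2, -⟩ := hstep t ht
    rw [he2]; exact Finset.subset_insert e _
  have hsubd : ∀ d t, t + d ≤ l → Str t ⊆ Str (t + d) := by
    intro d
    induction d with
    | zero => intro t _; exact subset_rfl
    | succ n ih =>
      intro t ht
      have h1 : t + n < l := by omega
      have := ih t (le_of_lt h1)
      have := hchain (t + n) h1
      calc Str t ⊆ Str (t + n) := ih t (le_of_lt h1)
        _ ⊆ Str (t + n + 1) := hchain (t + n) h1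
  have hsubl : ∀ t, t ≤ l → Str t ⊆ Str l := by
    intro t ht
    have := hsubd (l - t) t (by omega)
    rwa [show t + (l - t) = l by omega] at this
  -- greedy step bound
  set δ : ℕ → ℝ := fun t => g (Str (t + 1)) - g (Str t) with hδ
  have hgreedy : ∀ t, t < l → ∀ e, g (insert e (Str t)) - g (Str t) ≤ δ t := by
    intro t ht e
    obtain ⟨e₀, -, he2, hmax⟩ := hstep t ht
    have h1 := hmax e
    rw [Finset.sum_sub_distrib, Finset.sum_sub_distrib] at h1
    simp only [hδ, hg, he2]
    exact h1
  -- marginal at Str l bounded by every δ t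
  have hmargl : ∀ e, ∀ t, t < l → g (insert e (Str l)) - g (Str l) ≤ δ t := by
    intro e t ht
    have h1 := marg_mono hgs hgm (hsubl t (le_of_lt ht)) e
    exact le_trans h1 (hgreedy t ht e)
  -- key sum bound
  have hkey : ∑ e ∈ Sstar, (g (insert e (Str l)) - g (Str l)) ≤ g (Str l) := by
    rcases Nat.eq_zero_or_pos l with hl | hl
    · have : Sstar = ∅ := Finset.card_eq_zero.mp (by rw [hSstar, hl])
      rw [this]
      simpa using hgnn (Str l)
    · obtain ⟨t₀, ht₀, hmin⟩ := Finset.exists_min_image (Finset.range l) δ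
        ⟨0, Finset.mem_range.mpr hl⟩
      have ht₀l : t₀ < l := Finset.mem_range.mp ht₀
      have h1 : ∑ e ∈ Sstar, (g (insert e (Str l)) - g (Str l)) ≤ ∑ _e ∈ Sstar, δ t₀ :=
        Finset.sum_le_sum fun e _ => hmargl e t₀ ht₀l
      have h2 : ∑ _e ∈ Sstar, δ t₀ = (l : ℝ) * δ t₀ := by
        rw [Finset.sum_const, hSstar, nsmul_eq_mul]
      have h3 : (l : ℝ) * δ t₀ ≤ ∑ t ∈ Finset.range l, δ t := by
        have := Finset.card_nsmul_le_sum (Finset.range l) δ (δ t₀)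
          (fun t ht => hmin t ht)
        rwa [Finset.card_range, nsmul_eq_mul] at this
      have h4 : ∑ t ∈ Finset.range l, δ t = g (Str l) - g (Str 0) :=
        Finset.sum_range_sub (fun t => g (Str t)) l
      have h5 : 0 ≤ g (Str 0) := hgnn _
      linarith
  -- per-i bound
  have hper : ∀ i, f i (Sstar ∪ Sistar i) ≤ f i (Str l ∪ Sistar i) +
      ∑ e ∈ Sstar, (f i (insert e (Str l)) - f i (Str l)) := by
    intro i
    have h1 : f i (Sstar ∪ Sistar i) ≤ f i (Sstar ∪ (Str l ∪ Sistar i)) :=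
      hmono i _ _ (Finset.union_subset_union_right Finset.subset_union_right)
    have h2 := sum_marg_bound (hsub i) (hmono i) Sstar (Str l ∪ Sistar i)
    have h3 : ∑ e ∈ Sstar, (f i (insert e (Str l ∪ Sistar i)) - f i (Str l ∪ Sistar i)) ≤
        ∑ e ∈ Sstar, (f i (insert e (Str l)) - f i (Str l)) :=
      Finset.sum_le_sum fun e _ =>
        marg_mono (hsub i) (hmono i) (Finset.subset_union_left) e
    linarith
  have hsum : ∑ i, f i (Sstar ∪ Sistar i) ≤ (∑ i, f i (Str l ∪ Sistar i)) +
      ∑ e ∈ Sstar, (g (insert e (Str l)) - g (Str l)) := by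
    have h1 : ∑ i, f i (Sstar ∪ Sistar i) ≤ ∑ i, (f i (Str l ∪ Sistar i) +
        ∑ e ∈ Sstar, (f i (insert e (Str l)) - f i (Str l))) :=
      Finset.sum_le_sum fun i _ => hper i
    rw [Finset.sum_add_distrib, Finset.sum_comm] at h1
    convert h1 using 3 with e _
    simp only [hg]
    rw [Finset.sum_sub_distrib]
  have : g (Str l) = ∑ i, f i (Str l) := rfl
  linarith
end

section
/- Let f₁, ..., f_m : 2^V → ℝ≥0 be monotone submodular. Define OPT = max over sets S_tr of size at most l and S₁,...,S_m each of size at most k-l of Σᵢ fᵢ(S_tr ∪ Sᵢ). Let (S_tr, S₁, ..., S_m) be the output of Algorithm 1 (greedy on the sum Σfᵢ for l rounds to build S_tr, then greedy on each fᵢ for k-l rounds to build Sᵢ on top of S_tr), and set β = Σᵢ fᵢ(S_tr). Then Σᵢ fᵢ(S_tr ∪ Sᵢ) ≥ max{ β, (1 - 1/e)(OPT - 2β) + β }. -/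
open Finset

private lemma sub_marg {V : Type*} [DecidableEq V] {f : Finset V → ℝ}
    (hs : Submodular f) (hm : MonotoneSet f) {A B : Finset V} (hAB : A ⊆ B) (e : V) :
    f (insert e B) - f B ≤ f (insert e A) - f A := by
  have h := hs (insert e A) B
  have h1 : insert e A ∪ B = insert e B := by
    rw [Finset.insert_union, Finset.union_eq_right.mpr hAB]
  have h2 : f A ≤ f (insert e A ∩ B) := by
    apply hm
    intro x hx
    exact Finset.mem_inter.mpr ⟨Finset.mem_insert_of_mem hx, hAB hx⟩
  rw [h1] at h
  linarith

private lemma marg_sum {V : Type*} [DecidableEq V] {f : Finset V → ℝ}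
    (hs : Submodular f) (hm : MonotoneSet f) (A O : Finset V) :
    f (A ∪ O) - f A ≤ ∑ e ∈ O, (f (insert e A) - f A) := by
  classical
  induction O using Finset.induction_on with
  | empty => simp
  | insert e O he ih =>
    rw [Finset.sum_insert he, Finset.union_insert]
    have h2 : f (insert e (A ∪ O)) - f (A ∪ O) ≤ f (insert e A) - f A :=
      sub_marg hs hm Finset.subset_union_left e
    linarith

private lemma greedy_guarantee {V : Type*} [DecidableEq V] {f : Finset V → ℝ}
    (hs : Submodular f) (hm : MonotoneSet f) (B : Finset V)
    (T : ℕ) (S : ℕ → Finset V) (hS0 : S 0 = ∅)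
    (hstep : ∀ t < T, ∃ e, S (t + 1) = insert e (S t) ∧
      ∀ e', f (B ∪ insert e' (S t)) - f (B ∪ S t) ≤
        f (B ∪ insert e (S t)) - f (B ∪ S t))
    (O : Finset V) (hO : O.card ≤ T) :
    f (B ∪ O) - f (B ∪ S T) ≤ Real.exp (-1) * (f (B ∪ O) - f B) := by
  rcases Nat.eq_zero_or_pos T with hT0 | hTpos
  · subst hT0
    have hO0 : O = ∅ := Finset.card_eq_zero.mp (Nat.le_zero.mp hO)
    simp [hO0, hS0]
  · have hT1 : (1:ℝ) ≤ T := by exact_mod_cast hTpos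
    have hTpos' : (0:ℝ) < T := by linarith
    have h3 : (0:ℝ) ≤ 1 - 1/(T:ℝ) := by
      have : 1/(T:ℝ) ≤ 1 := by rw [div_le_one hTpos']; exact hT1
      linarith
    have hdec : ∀ t < T, f (B ∪ O) - f (B ∪ S (t+1)) ≤
        (1 - 1/(T:ℝ)) * (f (B ∪ O) - f (B ∪ S t)) := by
      intro t ht
      obtain ⟨e, heq, hbest⟩ := hstep t ht
      have hgain0 : 0 ≤ f (B ∪ S (t+1)) - f (B ∪ S t) := by
        rw [heq]
        have hsub' : B ∪ S t ⊆ B ∪ insert e (S t) :=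
          Finset.union_subset_union_right (Finset.subset_insert _ _)
        linarith [hm _ _ hsub']
      have hkey : f (B ∪ O) - f (B ∪ S t) ≤ (T:ℝ) * (f (B ∪ S (t+1)) - f (B ∪ S t)) := by
        have hm1 : f (B ∪ O) ≤ f ((B ∪ S t) ∪ O) :=
          hm _ _ (Finset.union_subset_union_left Finset.subset_union_left)
        have h2 := marg_sum hs hm (B ∪ S t) O
        have hterm : ∀ e' ∈ O, f (insert e' (B ∪ S t)) - f (B ∪ S t) ≤
            f (B ∪ S (t+1)) - f (B ∪ S t) := by
          intro e' _
          rw [heq, ← Finset.union_insert]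
          exact hbest e'
        have h4 := Finset.sum_le_card_nsmul O _ _ hterm
        rw [nsmul_eq_mul] at h4
        have h5 : (O.card : ℝ) * (f (B ∪ S (t+1)) - f (B ∪ S t)) ≤
            (T:ℝ) * (f (B ∪ S (t+1)) - f (B ∪ S t)) := by
          apply mul_le_mul_of_nonneg_right _ hgain0
          exact_mod_cast hO
        linarith
      have hdiv : (f (B ∪ O) - f (B ∪ S t)) / (T:ℝ) ≤ f (B ∪ S (t+1)) - f (B ∪ S t) := by
        rw [div_le_iff₀ hTpos']
        linarith [mul_comm (T:ℝ) (f (B ∪ S (t+1)) - f (B ∪ S t))]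
      have e1 : (1 - 1/(T:ℝ)) * (f (B ∪ O) - f (B ∪ S t))
          = (f (B ∪ O) - f (B ∪ S t)) - (f (B ∪ O) - f (B ∪ S t)) / (T:ℝ) := by
        ring
      linarith
    have hind : ∀ t ≤ T, f (B ∪ O) - f (B ∪ S t) ≤
        (1 - 1/(T:ℝ))^t * (f (B ∪ O) - f (B ∪ S 0)) := by
      intro t
      induction t with
      | zero => intro _; simp
      | succ n ih =>
        intro h
        have h1 := ih (by omega)
        have h2 := hdec n (by omega)
        calc f (B ∪ O) - f (B ∪ S (n+1)) ≤ (1 - 1/(T:ℝ)) * (f (B ∪ O) - f (B ∪ S n)) := h2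
          _ ≤ (1 - 1/(T:ℝ)) * ((1 - 1/(T:ℝ))^n * (f (B ∪ O) - f (B ∪ S 0))) :=
              mul_le_mul_of_nonneg_left h1 h3
          _ = (1 - 1/(T:ℝ))^(n+1) * (f (B ∪ O) - f (B ∪ S 0)) := by ring
    have hδ0 : 0 ≤ f (B ∪ O) - f (B ∪ S 0) := by
      rw [hS0, Finset.union_empty]
      linarith [hm _ _ (Finset.subset_union_left : B ⊆ B ∪ O)]
    have hexp : (1 - 1/(T:ℝ))^T ≤ Real.exp (-1) := by
      have h4 : 1 - 1/(T:ℝ) ≤ Real.exp (-(1/(T:ℝ))) := by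
        linarith [Real.add_one_le_exp (-(1/(T:ℝ)))]
      calc (1 - 1/(T:ℝ))^T ≤ (Real.exp (-(1/(T:ℝ))))^T := pow_le_pow_left₀ h3 h4 T
        _ = Real.exp ((T:ℝ) * (-(1/(T:ℝ)))) := (Real.exp_nat_mul _ _).symm
        _ = Real.exp (-1) := by
            congr 1
            rw [mul_neg, mul_one_div, div_self hTpos'.ne']
    have hfin1 := hind T le_rfl
    have hfin2 : (1 - 1/(T:ℝ))^T * (f (B ∪ O) - f (B ∪ S 0)) ≤
        Real.exp (-1) * (f (B ∪ O) - f (B ∪ S 0)) :=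
      mul_le_mul_of_nonneg_right hexp hδ0
    rw [hS0, Finset.union_empty] at hfin1 hfin2
    linarith

/-- Proposition 1: guarantee for Algorithm 1, which first builds
`S_tr` greedily on the sum `Σᵢ fᵢ` for `l` rounds and then builds each `Sᵢ`
greedily on `fᵢ` on top of `S_tr` for `k - l` rounds. -/
theorem algorithm1_guarantee {V : Type*} [Fintype V] [DecidableEq V]
    (m k l : ℕ) (hlk : l ≤ k)
    (f : Fin m → Finset V → ℝ)
    (hnonneg : ∀ i S, 0 ≤ f i S)
    (hsub : ∀ i, Submodular (f i)) (hmono : ∀ i, MonotoneSet (f i))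
    (OPT : ℝ)
    (hOPT : IsGreatest {v : ℝ | ∃ (Str' : Finset V) (S' : Fin m → Finset V),
      Str'.card ≤ l ∧ (∀ i, (S' i).card ≤ k - l) ∧
      v = ∑ i, f i (Str' ∪ S' i)} OPT)
    -- phase 1: greedy on the sum
    (Str : ℕ → Finset V) (hStr0 : Str 0 = ∅)
    (hStrStep : ∀ t < l, ∃ e, e ∉ Str t ∧ Str (t + 1) = insert e (Str t) ∧
      ∀ e', (∑ i, (f i (insert e' (Str t)) - f i (Str t))) ≤
        ∑ i, (f i (insert e (Str t)) - f i (Str t)))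
    -- phase 2: greedy on each fᵢ on top of Str l
    (S : Fin m → ℕ → Finset V) (hS0 : ∀ i, S i 0 = ∅)
    (hSStep : ∀ i, ∀ t < k - l, ∃ e, e ∉ Str l ∪ S i t ∧
      S i (t + 1) = insert e (S i t) ∧
      ∀ e', f i (Str l ∪ insert e' (S i t)) - f i (Str l ∪ S i t) ≤
        f i (Str l ∪ insert e (S i t)) - f i (Str l ∪ S i t))
    (β : ℝ) (hβ : β = ∑ i, f i (Str l)) :
    max β ((1 - 1 / Real.exp 1) * (OPT - 2 * β) + β) ≤
      ∑ i, f i (Str l ∪ S i (k - l)) := by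
  classical
  obtain ⟨Strs, Ss, hcardStr, hcardS, hOPTeq⟩ := hOPT.1
  have hβ0 : 0 ≤ β := by
    rw [hβ]; exact Finset.sum_nonneg fun i _ => hnonneg i _
  -- monotonicity of the Str chain
  have hchain : ∀ u, u ≤ l → ∀ t ≤ u, Str t ⊆ Str u := by
    intro u
    induction u with
    | zero => intro _ t ht; interval_cases t; exact subset_rfl
    | succ n ih =>
      intro hul t ht
      rcases Nat.eq_or_lt_of_le ht with h | h
      · rw [h]
      · obtain ⟨e, _, heq, _⟩ := hStrStep n (by omega)
        rw [heq]
        exact (ih (by omega) t (by omega)).trans (Finset.subset_insert _ _)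
  have hStrSub : ∀ t ≤ l, Str t ⊆ Str l := fun t ht => hchain l le_rfl t ht
  -- phase 1 marginal bound
  have hP1 : ∀ e, (l:ℝ) * (∑ i, (f i (insert e (Str l)) - f i (Str l))) ≤ β := by
    intro e
    have hstep : ∀ t < l, (∑ i, (f i (insert e (Str l)) - f i (Str l))) ≤
        ∑ i, (f i (Str (t+1)) - f i (Str t)) := by
      intro t ht
      obtain ⟨et, _, heq, hbest⟩ := hStrStep t ht
      have h1 : (∑ i, (f i (insert e (Str l)) - f i (Str l))) ≤
          ∑ i, (f i (insert e (Str t)) - f i (Str t)) :=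
        Finset.sum_le_sum fun i _ => sub_marg (hsub i) (hmono i) (hStrSub t (le_of_lt ht)) e
      have h2 := hbest e
      rw [heq]
      linarith
    have hsum : ∑ _t ∈ Finset.range l, (∑ i, (f i (insert e (Str l)) - f i (Str l))) ≤
        ∑ t ∈ Finset.range l, ∑ i, (f i (Str (t+1)) - f i (Str t)) :=
      Finset.sum_le_sum fun t ht => hstep t (Finset.mem_range.mp ht)
    rw [Finset.sum_const, Finset.card_range, nsmul_eq_mul, Finset.sum_comm] at hsum
    have htel : ∀ i : Fin m, ∑ t ∈ Finset.range l, (f i (Str (t+1)) - f i (Str t))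
        = f i (Str l) - f i (Str 0) := fun i => Finset.sum_range_sub (fun t => f i (Str t)) l
    rw [Finset.sum_congr rfl (fun i _ => htel i)] at hsum
    rw [Finset.sum_sub_distrib, Finset.sum_sub_distrib] at hsum
    have h0 : 0 ≤ ∑ i, f i (Str 0) := Finset.sum_nonneg fun i _ => hnonneg i _
    rw [hβ, Finset.sum_sub_distrib]
    linarith
  -- gap bound
  have hgap : ∑ i, (f i ((Str l ∪ Ss i) ∪ Strs) - f i (Str l ∪ Ss i)) ≤ β := by
    have h1 : ∀ i : Fin m, f i ((Str l ∪ Ss i) ∪ Strs) - f i (Str l ∪ Ss i) ≤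
        ∑ e ∈ Strs, (f i (insert e (Str l)) - f i (Str l)) := by
      intro i
      calc f i ((Str l ∪ Ss i) ∪ Strs) - f i (Str l ∪ Ss i)
          ≤ ∑ e ∈ Strs, (f i (insert e (Str l ∪ Ss i)) - f i (Str l ∪ Ss i)) :=
            marg_sum (hsub i) (hmono i) _ _
        _ ≤ ∑ e ∈ Strs, (f i (insert e (Str l)) - f i (Str l)) :=
            Finset.sum_le_sum fun e _ => sub_marg (hsub i) (hmono i) Finset.subset_union_left e
    have h2 : ∑ i, (f i ((Str l ∪ Ss i) ∪ Strs) - f i (Str l ∪ Ss i)) ≤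
        ∑ i, ∑ e ∈ Strs, (f i (insert e (Str l)) - f i (Str l)) :=
      Finset.sum_le_sum fun i _ => h1 i
    rw [Finset.sum_comm] at h2
    rcases Nat.eq_zero_or_pos l with hl0 | hlpos
    · have hs0 : Strs = ∅ := Finset.card_eq_zero.mp (by omega)
      simp only [hs0, Finset.union_empty, sub_self, Finset.sum_const_zero]
      exact hβ0
    · have hlpos' : (0:ℝ) < l := by exact_mod_cast hlpos
      have h3 : ∀ e ∈ Strs, (∑ i, (f i (insert e (Str l)) - f i (Str l))) ≤ β / l := by
        intro e _
        rw [le_div_iff₀ hlpos']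
        linarith [hP1 e, mul_comm (l:ℝ) (∑ i, (f i (insert e (Str l)) - f i (Str l)))]
      have h4 := Finset.sum_le_card_nsmul Strs _ _ h3
      rw [nsmul_eq_mul] at h4
      have h5 : (Strs.card:ℝ) * (β/l) ≤ (l:ℝ) * (β/l) := by
        apply mul_le_mul_of_nonneg_right
        · exact_mod_cast hcardStr
        · exact div_nonneg hβ0 (le_of_lt hlpos')
      have h6 : (l:ℝ) * (β/l) = β := by field_simp
      linarith
  -- OPT ≤ ρ + β
  have hρ : OPT - β ≤ ∑ i, f i (Str l ∪ Ss i) := by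
    have h1 : ∀ i : Fin m, f i (Strs ∪ Ss i) ≤ f i ((Str l ∪ Ss i) ∪ Strs) := by
      intro i
      apply hmono
      intro x hx
      rw [Finset.mem_union] at hx ⊢
      rcases hx with h | h
      · exact Or.inr h
      · exact Or.inl (Finset.mem_union_right _ h)
    have h2 : OPT ≤ ∑ i, f i ((Str l ∪ Ss i) ∪ Strs) := by
      rw [hOPTeq]; exact Finset.sum_le_sum fun i _ => h1 i
    rw [Finset.sum_sub_distrib] at hgap
    linarith
  -- phase 2 per-function greedy guarantee
  have hgreedy : ∀ i : Fin m, f i (Str l ∪ Ss i) - f i (Str l ∪ S i (k - l)) ≤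
      Real.exp (-1) * (f i (Str l ∪ Ss i) - f i (Str l)) := by
    intro i
    apply greedy_guarantee (hsub i) (hmono i) (Str l) (k-l) (S i) (hS0 i) _ (Ss i) (hcardS i)
    intro t ht
    obtain ⟨e, _, heq, hbest⟩ := hSStep i t ht
    exact ⟨e, heq, hbest⟩
  have hsum2 : ∑ i, f i (Str l ∪ Ss i) - ∑ i, f i (Str l ∪ S i (k-l)) ≤
      Real.exp (-1) * (∑ i, f i (Str l ∪ Ss i) - β) := by
    have h := Finset.sum_le_sum (fun i (_ : i ∈ Finset.univ) => hgreedy i)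
    rw [← Finset.mul_sum] at h
    rw [Finset.sum_sub_distrib, Finset.sum_sub_distrib] at h
    rw [hβ]
    linarith
  have hfinal_ge : ∑ i, f i (Str l) ≤ ∑ i, f i (Str l ∪ S i (k-l)) :=
    Finset.sum_le_sum fun i _ => hmono i _ _ Finset.subset_union_left
  have hexp1 : Real.exp (-1) = 1 / Real.exp 1 := by
    rw [Real.exp_neg, one_div]
  have hexp_le : Real.exp (-1) ≤ 1 := by
    have := Real.exp_le_exp.mpr (by norm_num : (-1:ℝ) ≤ 0)
    simpa using this
  apply max_le
  · rw [hβ]; exact hfinal_ge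
  · rw [← hexp1]
    have hmul : (1 - Real.exp (-1)) * (OPT - 2*β) ≤
        (1 - Real.exp (-1)) * ((∑ i, f i (Str l ∪ Ss i)) - β) :=
      mul_le_mul_of_nonneg_left (by linarith) (by linarith)
    have hid : (1 - Real.exp (-1)) * ((∑ i, f i (Str l ∪ Ss i)) - β) =
        ((∑ i, f i (Str l ∪ Ss i)) - β) -
          Real.exp (-1) * ((∑ i, f i (Str l ∪ Ss i)) - β) := by ring
    linarith
end

section
/- Let f₁, ..., f_m : 2^V → ℝ≥0 be monotone submodular. Define OPT = max over sets S_tr of size at most l and S₁,...,S_m each of size at most k-l of Σᵢ fᵢ(S_tr ∪ Sᵢ). Let (S_tr, S₁, ..., S_m) be the output of Algorithm 2 (greedy on each fᵢ for k-l rounds to build Sᵢ, then greedy on Σᵢ fᵢ(· ∪ Sᵢ) for l rounds to build S_tr), and set γ = Σᵢ fᵢ(Sᵢ). Then Σᵢ fᵢ(S_tr ∪ Sᵢ) ≥ max{ γ, (1 - 1/e)(OPT - 2γ) + γ }. -/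
open Finset

namespace Alg2Aux

variable {V : Type*} [DecidableEq V]

lemma marginal_subset {g : Finset V → ℝ} (hsub : Submodular g) (hmono : MonotoneSet g)
    {A B : Finset V} (hAB : A ⊆ B) (e : V) :
    g (insert e B) - g B ≤ g (insert e A) - g A := by
  by_cases he : e ∈ B
  · rw [Finset.insert_eq_self.2 he]
    have := hmono A (insert e A) (Finset.subset_insert _ _)
    linarith
  · have h := hsub (insert e A) B
    have h1 : insert e A ∪ B = insert e B := by
      rw [Finset.insert_union, Finset.union_eq_right.2 hAB]
    have h2 : insert e A ∩ B = A := by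
      ext x
      simp only [Finset.mem_inter, Finset.mem_insert]
      constructor
      · rintro ⟨hx | hx, hxB⟩
        · exact absurd (hx ▸ hxB) he
        · exact hx
      · intro hx; exact ⟨Or.inr hx, hAB hx⟩
    rw [h1, h2] at h
    linarith

lemma union_marginals {g : Finset V → ℝ} (hsub : Submodular g) (hmono : MonotoneSet g)
    (C T : Finset V) :
    g (C ∪ T) - g T ≤ ∑ e ∈ C, (g (insert e T) - g T) := by
  induction C using Finset.induction_on with
  | empty => simp
  | @insert a C ha ih =>
    rw [Finset.sum_insert ha, Finset.insert_union]
    have h1 : g (insert a (C ∪ T)) - g (C ∪ T) ≤ g (insert a T) - g T :=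
      marginal_subset hsub hmono Finset.subset_union_right a
    linarith

lemma chain_mono (T : ℕ → Finset V) (L : ℕ)
    (hstep : ∀ t < L, ∃ e, T (t + 1) = insert e (T t)) :
    ∀ s t, s ≤ t → t ≤ L → T s ⊆ T t := by
  intro s t hst htL
  induction t, hst using Nat.le_induction with
  | base => exact Finset.Subset.refl _
  | succ n hn ih =>
    have hnL : n < L := htL
    obtain ⟨e, he⟩ := hstep n hnL
    exact (ih (le_of_lt hnL)).trans (he ▸ Finset.subset_insert _ _)

lemma greedy_sat {g : Finset V → ℝ} (hsub : Submodular g) (hmono : MonotoneSet g)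
    (T : ℕ → Finset V) (L : ℕ)
    (hstep : ∀ t < L, ∃ e, T (t + 1) = insert e (T t) ∧
      ∀ e', g (insert e' (T t)) - g (T t) ≤ g (insert e (T t)) - g (T t))
    (C : Finset V) (hC : C.card ≤ L) :
    g (C ∪ T L) - g (T L) ≤ g (T L) - g (T 0) := by
  rcases Nat.eq_zero_or_pos L with hL | hL
  · subst hL
    have : C = ∅ := Finset.card_eq_zero.1 (Nat.le_zero.1 hC)
    simp [this]
  · have hLpos : (0:ℝ) < L := by exact_mod_cast hL
    have hchain := chain_mono T L (fun t ht => (hstep t ht).imp (fun e h => h.1))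
    have marg : ∀ e : V, g (insert e (T L)) - g (T L) ≤ (g (T L) - g (T 0)) / L := by
      intro e
      have each : ∀ t ∈ Finset.range L,
          g (insert e (T L)) - g (T L) ≤ g (T (t + 1)) - g (T t) := by
        intro t ht
        rw [Finset.mem_range] at ht
        obtain ⟨e', heq, hmax⟩ := hstep t ht
        calc g (insert e (T L)) - g (T L)
            ≤ g (insert e (T t)) - g (T t) :=
              marginal_subset hsub hmono (hchain t L (le_of_lt ht) le_rfl) e
          _ ≤ g (insert e' (T t)) - g (T t) := hmax e
          _ = g (T (t + 1)) - g (T t) := by rw [heq]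
      have hsum := Finset.sum_le_sum each
      rw [Finset.sum_const, Finset.card_range, Finset.sum_range_sub (fun t => g (T t)) L] at hsum
      rw [le_div_iff₀ hLpos]
      rw [nsmul_eq_mul] at hsum
      linarith
    have h0 : 0 ≤ g (T L) - g (T 0) :=
      sub_nonneg.2 (hmono _ _ (hchain 0 L (Nat.zero_le _) le_rfl))
    calc g (C ∪ T L) - g (T L)
        ≤ ∑ e ∈ C, (g (insert e (T L)) - g (T L)) := union_marginals hsub hmono C (T L)
      _ ≤ ∑ _e ∈ C, (g (T L) - g (T 0)) / L := Finset.sum_le_sum (fun e _ => marg e)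
      _ = (C.card : ℝ) * ((g (T L) - g (T 0)) / L) := by
          rw [Finset.sum_const, nsmul_eq_mul]
      _ ≤ (L : ℝ) * ((g (T L) - g (T 0)) / L) := by
          apply mul_le_mul_of_nonneg_right _ (div_nonneg h0 (le_of_lt hLpos))
          exact_mod_cast hC
      _ = g (T L) - g (T 0) := by field_simp

lemma greedy_gain {g : Finset V → ℝ} (hsub : Submodular g) (hmono : MonotoneSet g)
    (T : ℕ → Finset V) (hT0 : T 0 = ∅) (L : ℕ)
    (hstep : ∀ t < L, ∃ e, T (t + 1) = insert e (T t) ∧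
      ∀ e', g (insert e' (T t)) - g (T t) ≤ g (insert e (T t)) - g (T t))
    (C : Finset V) (hC : C.card ≤ L) :
    (1 - 1 / Real.exp 1) * (g C - g (T 0)) ≤ g (T L) - g (T 0) := by
  have hδ0 : 0 ≤ g C - g (T 0) :=
    sub_nonneg.2 (hmono _ _ (by rw [hT0]; exact Finset.empty_subset _))
  rcases Nat.eq_zero_or_pos L with hL | hL
  · subst hL
    have hCe : C = ∅ := Finset.card_eq_zero.1 (Nat.le_zero.1 hC)
    rw [hCe, hT0]
    simp
  · have hLpos : (0:ℝ) < L := by exact_mod_cast hL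
    have hL1 : (1:ℝ) ≤ L := by exact_mod_cast hL
    have hfac : (0:ℝ) ≤ 1 - 1 / L := by
      have : (1:ℝ) / L ≤ 1 := by rw [div_le_one hLpos]; exact hL1
      linarith
    have hrec : ∀ t, t ≤ L → g C - g (T t) ≤ (1 - 1/(L:ℝ))^t * (g C - g (T 0)) := by
      intro t
      induction t with
      | zero => intro _; simp
      | succ n ih =>
        intro hn1
        have hnL : n < L := hn1
        have ihn := ih (le_of_lt hnL)
        obtain ⟨e, heq, hmax⟩ := hstep n hnL
        have hstepnn : 0 ≤ g (T (n + 1)) - g (T n) :=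
          sub_nonneg.2 (hmono _ _ (heq ▸ Finset.subset_insert _ _))
        have step : g C - g (T n) ≤ (L:ℝ) * (g (T (n + 1)) - g (T n)) := by
          have h1 : g C ≤ g (C ∪ T n) := hmono _ _ Finset.subset_union_left
          have h2 := union_marginals hsub hmono C (T n)
          have h3 : ∑ e' ∈ C, (g (insert e' (T n)) - g (T n)) ≤
              (C.card : ℝ) * (g (T (n + 1)) - g (T n)) := by
            rw [heq]
            calc ∑ e' ∈ C, (g (insert e' (T n)) - g (T n))
                ≤ ∑ _e' ∈ C, (g (insert e (T n)) - g (T n)) :=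
                  Finset.sum_le_sum (fun e' _ => hmax e')
              _ = (C.card : ℝ) * (g (insert e (T n)) - g (T n)) := by
                  rw [Finset.sum_const, nsmul_eq_mul]
          have h4 : (C.card : ℝ) * (g (T (n + 1)) - g (T n)) ≤
              (L : ℝ) * (g (T (n + 1)) - g (T n)) := by
            apply mul_le_mul_of_nonneg_right _ hstepnn
            exact_mod_cast hC
          linarith
        have key : g C - g (T (n + 1)) ≤ (1 - 1/(L:ℝ)) * (g C - g (T n)) := by
          have hdiv : (g C - g (T n)) / L ≤ g (T (n + 1)) - g (T n) := by
            rw [div_le_iff₀ hLpos]; linarith [step]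
          have : (1 - 1/(L:ℝ)) * (g C - g (T n)) =
              (g C - g (T n)) - (g C - g (T n)) / L := by field_simp
          rw [this]
          linarith
        calc g C - g (T (n + 1))
            ≤ (1 - 1/(L:ℝ)) * (g C - g (T n)) := key
          _ ≤ (1 - 1/(L:ℝ)) * ((1 - 1/(L:ℝ))^n * (g C - g (T 0))) :=
              mul_le_mul_of_nonneg_left ihn hfac
          _ = (1 - 1/(L:ℝ))^(n + 1) * (g C - g (T 0)) := by ring
    have hfin := hrec L le_rfl
    have hpow : (1 - 1/(L:ℝ))^L ≤ 1 / Real.exp 1 := by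
      have h1 : (1 - 1/(L:ℝ)) ≤ Real.exp (-(1/L)) := by
        have := Real.add_one_le_exp (-(1/(L:ℝ)))
        linarith
      calc (1 - 1/(L:ℝ))^L ≤ (Real.exp (-(1/(L:ℝ))))^L := pow_le_pow_left₀ hfac h1 L
        _ = Real.exp ((L:ℝ) * (-(1/(L:ℝ)))) := (Real.exp_nat_mul _ L).symm
        _ = Real.exp (-1) := by
            congr 1
            field_simp
        _ = 1 / Real.exp 1 := by rw [Real.exp_neg]; rw [one_div]
    have : (1 - 1/(L:ℝ))^L * (g C - g (T 0)) ≤ (1 / Real.exp 1) * (g C - g (T 0)) :=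
      mul_le_mul_of_nonneg_right hpow hδ0
    nlinarith [hfin, this]

end Alg2Aux
/-- Proposition 2: guarantee for Algorithm 2, which first builds
each `Sᵢ` greedily on `fᵢ` for `k - l` rounds, and then builds `S_tr` greedily
on `Σᵢ fᵢ(· ∪ Sᵢ)` for `l` rounds. -/
theorem algorithm2_guarantee {V : Type*} [Fintype V] [DecidableEq V]
    (m k l : ℕ) (hlk : l ≤ k)
    (f : Fin m → Finset V → ℝ)
    (hnonneg : ∀ i S, 0 ≤ f i S)
    (hsub : ∀ i, Submodular (f i)) (hmono : ∀ i, MonotoneSet (f i))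
    (OPT : ℝ)
    (hOPT : IsGreatest {v : ℝ | ∃ (Str' : Finset V) (S' : Fin m → Finset V),
      Str'.card ≤ l ∧ (∀ i, (S' i).card ≤ k - l) ∧
      v = ∑ i, f i (Str' ∪ S' i)} OPT)
    -- phase 1: greedy on each fᵢ
    (S : Fin m → ℕ → Finset V) (hS0 : ∀ i, S i 0 = ∅)
    (hSStep : ∀ i, ∀ t < k - l, ∃ e, e ∉ S i t ∧
      S i (t + 1) = insert e (S i t) ∧
      ∀ e', f i (insert e' (S i t)) - f i (S i t) ≤
        f i (insert e (S i t)) - f i (S i t))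
    -- phase 2: greedy on the sum of marginals on top of the Sᵢ's
    (Str : ℕ → Finset V) (hStr0 : Str 0 = ∅)
    (hStrStep : ∀ t < l, ∃ e, e ∉ Str t ∧ Str (t + 1) = insert e (Str t) ∧
      ∀ e', (∑ i, (f i (insert e' (Str t) ∪ S i (k - l)) - f i (Str t ∪ S i (k - l)))) ≤
        ∑ i, (f i (insert e (Str t) ∪ S i (k - l)) - f i (Str t ∪ S i (k - l))))
    (γ : ℝ) (hγ : γ = ∑ i, f i (S i (k - l))) :
    max γ ((1 - 1 / Real.exp 1) * (OPT - 2 * γ) + γ) ≤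
      ∑ i, f i (Str l ∪ S i (k - l)) := by
  classical
  set G : Finset V → ℝ := fun T => ∑ i, f i (T ∪ S i (k - l)) with hG
  -- G is monotone
  have hGmono : MonotoneSet G := by
    intro A B hAB
    apply Finset.sum_le_sum
    intro i _
    exact hmono i _ _ (Finset.union_subset_union_left hAB)
  -- G is submodular
  have hGsub : Submodular G := by
    intro A B
    simp only [hG]
    rw [← Finset.sum_add_distrib, ← Finset.sum_add_distrib]
    apply Finset.sum_le_sum
    intro i _
    have h := hsub i (A ∪ S i (k - l)) (B ∪ S i (k - l))
    have h1 : (A ∪ S i (k - l)) ∪ (B ∪ S i (k - l)) = (A ∪ B) ∪ S i (k - l) := by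
      ext x; simp only [Finset.mem_union]; tauto
    have h2 : (A ∪ S i (k - l)) ∩ (B ∪ S i (k - l)) = (A ∩ B) ∪ S i (k - l) := by
      ext x; simp only [Finset.mem_union, Finset.mem_inter]; tauto
    rw [h1, h2] at h
    linarith
  -- greedy steps for G
  have hGstep : ∀ t < l, ∃ e, Str (t + 1) = insert e (Str t) ∧
      ∀ e', G (insert e' (Str t)) - G (Str t) ≤ G (insert e (Str t)) - G (Str t) := by
    intro t ht
    obtain ⟨e, _, heq, hmax⟩ := hStrStep t ht
    refine ⟨e, heq, fun e' => ?_⟩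
    have := hmax e'
    simp only [hG]
    rw [← Finset.sum_sub_distrib, ← Finset.sum_sub_distrib]
    exact this
  have hG0 : G (Str 0) = γ := by
    rw [hStr0]
    simp only [hG, Finset.empty_union, hγ]
  -- first bound: γ ≤ G (Str l)
  have hchain := Alg2Aux.chain_mono Str l (fun t ht => (hGstep t ht).imp (fun e h => h.1))
  have hb1 : γ ≤ G (Str l) := by
    rw [← hG0]
    exact hGmono _ _ (hchain 0 l (Nat.zero_le _) le_rfl)
  -- extract the optimal solution
  obtain ⟨Str', S', hcard1, hcard2, hOPTeq⟩ := hOPT.1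
  -- saturation bound per i : f i (S' i ∪ S i (k-l)) ≤ 2 * f i (S i (k-l))
  have hsat : ∀ i, f i (S' i ∪ S i (k - l)) ≤ 2 * f i (S i (k - l)) := by
    intro i
    have h := Alg2Aux.greedy_sat (hsub i) (hmono i) (S i) (k - l)
      (fun t ht => (hSStep i t ht).imp (fun e hh => ⟨hh.2.1, hh.2.2⟩)) (S' i) (hcard2 i)
    have h0 : 0 ≤ f i (S i 0) := hnonneg i _
    linarith
  -- OPT ≤ G Str' + γ
  have hOPTle : OPT ≤ G Str' + γ := by
    rw [hOPTeq, hγ, hG, ← Finset.sum_add_distrib]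
    apply Finset.sum_le_sum
    intro i _
    have hm : f i (Str' ∪ S' i) ≤ f i ((Str' ∪ S i (k - l)) ∪ (S' i ∪ S i (k - l))) := by
      apply hmono i
      intro x hx
      simp only [Finset.mem_union] at hx ⊢
      tauto
    have hs := hsub i (Str' ∪ S i (k - l)) (S' i ∪ S i (k - l))
    have hint : f i (S i (k - l)) ≤
        f i ((Str' ∪ S i (k - l)) ∩ (S' i ∪ S i (k - l))) := by
      apply hmono i
      intro x hx
      simp only [Finset.mem_inter, Finset.mem_union]
      exact ⟨Or.inr hx, Or.inr hx⟩
    have h2 := hsat i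
    linarith
  -- greedy gain bound
  have hgain := Alg2Aux.greedy_gain hGsub hGmono Str hStr0 l hGstep Str' hcard1
  rw [hG0] at hgain
  have he1 : (0:ℝ) ≤ 1 - 1 / Real.exp 1 := by
    have h2 : (2:ℝ) ≤ Real.exp 1 := by
      have := Real.add_one_le_exp (1:ℝ)
      linarith
    have hpos : (0:ℝ) < Real.exp 1 := Real.exp_pos 1
    have : 1 / Real.exp 1 ≤ 1 / 2 := by
      apply one_div_le_one_div_of_le <;> linarith
    linarith
  have hb2 : (1 - 1 / Real.exp 1) * (OPT - 2 * γ) + γ ≤ G (Str l) := by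
    have hmul : (1 - 1 / Real.exp 1) * (OPT - 2 * γ) ≤
        (1 - 1 / Real.exp 1) * (G Str' - γ) :=
      mul_le_mul_of_nonneg_left (by linarith) he1
    linarith
  exact max_le hb1 hb2
end

section
/- Let f₁, ..., f_m : 2^V → ℝ≥0 be monotone submodular, and let S₁, ..., S_m ⊆ V be the sets produced by running greedy on each fᵢ separately for k-l rounds (each Sᵢ has size k-l). Then for every collection of sets S_tr* of size l and S₁*, ..., S_m* of size k-l, Σᵢ fᵢ(S_tr* ∪ Sᵢ*) - Σᵢ fᵢ(Sᵢ) ≤ Σᵢ fᵢ(S_tr* ∪ Sᵢ). -/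
open Finset

lemma marg_le {V : Type*} [DecidableEq V] {f : Finset V → ℝ}
    (hs : Submodular f) (hm : MonotoneSet f) {A B : Finset V} (h : B ⊆ A) (e : V) :
    f (insert e A) - f A ≤ f (insert e B) - f B := by
  by_cases he : e ∈ A
  · rw [Finset.insert_eq_self.2 he]
    have := hm B (insert e B) (Finset.subset_insert e B)
    linarith
  · have hsub := hs (insert e B) A
    have h1 : insert e B ∪ A = insert e A := by
      rw [Finset.insert_union, Finset.union_eq_right.2 h]
    have h2 : insert e B ∩ A = B := by
      ext x
      simp only [Finset.mem_inter, Finset.mem_insert]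
      constructor
      · rintro ⟨hx | hx, hxA⟩
        · exact absurd (hx ▸ hxA) he
        · exact hx
      · intro hx; exact ⟨Or.inr hx, h hx⟩
    rw [h1, h2] at hsub
    linarith

/-- inequality (17) of the paper: exchange bound for the sets
built by running greedy separately on each `fᵢ` for `k - l` rounds. -/
theorem separate_greedy_coupling {V : Type*} [Fintype V] [DecidableEq V]
    (m k l : ℕ) (hlk : l ≤ k)
    (f : Fin m → Finset V → ℝ)
    (hnonneg : ∀ i S, 0 ≤ f i S)
    (hsub : ∀ i, Submodular (f i)) (hmono : ∀ i, MonotoneSet (f i))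
    (S : Fin m → ℕ → Finset V) (hS0 : ∀ i, S i 0 = ∅)
    (hSStep : ∀ i, ∀ t < k - l, ∃ e, e ∉ S i t ∧
      S i (t + 1) = insert e (S i t) ∧
      ∀ e', f i (insert e' (S i t)) - f i (S i t) ≤
        f i (insert e (S i t)) - f i (S i t))
    (hScard : ∀ i, (S i (k - l)).card = k - l)
    (Strstar : Finset V) (hStr : Strstar.card = l)
    (Sistar : Fin m → Finset V) (hSi : ∀ i, (Sistar i).card = k - l) :
    (∑ i, f i (Strstar ∪ Sistar i)) - (∑ i, f i (S i (k - l))) ≤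
      ∑ i, f i (Strstar ∪ S i (k - l)) := by
  have key : ∀ i, f i (Strstar ∪ Sistar i) - f i (S i (k - l)) ≤
      f i (Strstar ∪ S i (k - l)) := by
    intro i
    -- the chain is increasing
    have hstep_sub : ∀ t < k - l, S i t ⊆ S i (t + 1) := by
      intro t ht
      obtain ⟨e, _, heq, _⟩ := hSStep i t ht
      rw [heq]; exact Finset.subset_insert e _
    have hchain : ∀ t ≤ k - l, S i t ⊆ S i (k - l) := by
      intro t ht
      obtain ⟨d, hd⟩ := Nat.le.dest ht
      clear ht
      induction d generalizing t with
      | zero => simp at hd; rw [hd]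
      | succ n ih =>
        have ht' : t < k - l := by omega
        exact (hstep_sub t ht').trans (ih (t + 1) (by omega))
    set L := (Sistar i).toList with hL
    have hLn : L.length = k - l := by rw [hL, Finset.length_toList, hSi i]
    have main : ∀ j ≤ k - l,
        f i (Strstar ∪ S i (k - l) ∪ (L.take j).toFinset) ≤
        f i (Strstar ∪ S i (k - l)) + (f i (S i j) - f i (S i 0)) := by
      intro j hj
      induction j with
      | zero => simp
      | succ n ih =>
        have hn : n < k - l := hj
        have ihh := ih (le_of_lt hn)
        obtain ⟨e, _, heq, hmax⟩ := hSStep i n hn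
        have hnL : n < L.length := by omega
        set a := L.get ⟨n, hnL⟩ with ha
        have htake : (L.take (n + 1)).toFinset = insert a (L.take n).toFinset := by
          rw [List.take_succ, List.getElem?_eq_getElem hnL]
          simp only [List.toFinset_append, Option.toList_some, List.toFinset_cons,
            List.toFinset_nil]
          rw [Finset.union_comm, Finset.insert_union, Finset.empty_union]
          rfl
        have hBA : S i n ⊆ Strstar ∪ S i (k - l) ∪ (L.take n).toFinset :=
          (hchain n (le_of_lt hn)).trans
            ((Finset.subset_union_right).trans Finset.subset_union_left)
        have h1 := marg_le (hsub i) (hmono i) hBA a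
        have h2 := hmax a
        rw [← heq] at h2
        rw [htake, Finset.union_insert]
        linarith
    have hfin := main (k - l) le_rfl
    have hLfull : (L.take (k - l)).toFinset = Sistar i := by
      rw [← hLn, List.take_length, hL, Finset.toList_toFinset]
    rw [hLfull] at hfin
    have hmon := hmono i (Strstar ∪ Sistar i)
      (Strstar ∪ S i (k - l) ∪ Sistar i)
      (by intro x hx; rcases Finset.mem_union.1 hx with h | h
          · exact Finset.mem_union_left _ (Finset.mem_union_left _ h)
          · exact Finset.mem_union_right _ h)
    have h0 : 0 ≤ f i (S i 0) := hnonneg i _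
    linarith
  rw [← Finset.sum_sub_distrib]
  exact Finset.sum_le_sum fun i _ => key i
end

section
/- Let f₁, ..., f_m : 2^V → ℝ≥0 be monotone submodular, and let S_tr*, {Sᵢ*} be an optimal solution to the meta-learning problem with value OPT. Suppose that θ₂ = Σᵢ fᵢ(S_tr^(2) ∪ Sᵢ^(2)) is the value of Algorithm 2's output and γ = Σᵢ fᵢ(Sᵢ^(2)). If S_tr^(2) is chosen greedily in Algorithm 2, then OPT - (θ₂ - γ)/(1 - 1/e) - γ ≤ Σᵢ [fᵢ(Sᵢ^(2) ∪ Sᵢ*) - fᵢ(Sᵢ^(2))]. -/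
open Finset

/-- inequality (34) in the proof of Theorem 1. -/
theorem alg2_cross_bound {V : Type*} [Fintype V] [DecidableEq V]
    (m k l : ℕ) (hlk : l ≤ k)
    (f : Fin m → Finset V → ℝ)
    (hnonneg : ∀ i S, 0 ≤ f i S)
    (hsub : ∀ i, Submodular (f i)) (hmono : ∀ i, MonotoneSet (f i))
    -- optimal solution
    (Strstar : Finset V) (hStrstar : Strstar.card ≤ l)
    (Sistar : Fin m → Finset V) (hSistar : ∀ i, (Sistar i).card ≤ k - l)
    (OPT : ℝ) (hOPTval : OPT = ∑ i, f i (Strstar ∪ Sistar i))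
    (hOPT : ∀ (Str' : Finset V) (S' : Fin m → Finset V), Str'.card ≤ l →
      (∀ i, (S' i).card ≤ k - l) → (∑ i, f i (Str' ∪ S' i)) ≤ OPT)
    -- output of Algorithm 2
    (Str2 : Finset V) (hStr2card : Str2.card ≤ l)
    (S2 : Fin m → Finset V) (hS2card : ∀ i, (S2 i).card ≤ k - l)
    (θ₂ γ : ℝ)
    (hθ₂ : θ₂ = ∑ i, f i (Str2 ∪ S2 i))
    (hγ : γ = ∑ i, f i (S2 i))
    -- greedy guarantee of phase 2 of Algorithm 2
    (hgreedy : ∀ S' : Finset V, S'.card ≤ l →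
      (1 - 1 / Real.exp 1) * ((∑ i, f i (S' ∪ S2 i)) - γ) ≤ θ₂ - γ) :
    OPT - (θ₂ - γ) / (1 - 1 / Real.exp 1) - γ ≤
      ∑ i, (f i (S2 i ∪ Sistar i) - f i (S2 i)) := by
  have he : (0:ℝ) < 1 - 1 / Real.exp 1 := by
    have h1 : (1:ℝ) < Real.exp 1 := by
      have := Real.add_one_le_exp 1; linarith
    have : 1 / Real.exp 1 < 1 := by
      rw [div_lt_one (by linarith)]; exact h1
    linarith
  -- key per-i inequality
  have key : ∀ i, f i (Strstar ∪ Sistar i) ≤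
      f i (Strstar ∪ S2 i) + (f i (S2 i ∪ Sistar i) - f i (S2 i)) := by
    intro i
    have hsb := hsub i (Strstar ∪ S2 i) (S2 i ∪ Sistar i)
    have h1 : f i (Strstar ∪ Sistar i) ≤
        f i ((Strstar ∪ S2 i) ∪ (S2 i ∪ Sistar i)) := by
      apply hmono i
      intro x hx
      rcases Finset.mem_union.1 hx with h | h
      · exact Finset.mem_union.2 (Or.inl (Finset.mem_union.2 (Or.inl h)))
      · exact Finset.mem_union.2 (Or.inr (Finset.mem_union.2 (Or.inr h)))
    have h2 : f i (S2 i) ≤ f i ((Strstar ∪ S2 i) ∩ (S2 i ∪ Sistar i)) := by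
      apply hmono i
      intro x hx
      exact Finset.mem_inter.2 ⟨Finset.mem_union.2 (Or.inr hx),
        Finset.mem_union.2 (Or.inl hx)⟩
    linarith
  have hsum : OPT ≤ (∑ i, f i (Strstar ∪ S2 i)) +
      ∑ i, (f i (S2 i ∪ Sistar i) - f i (S2 i)) := by
    rw [hOPTval, ← Finset.sum_add_distrib]
    exact Finset.sum_le_sum fun i _ => key i
  have hg := hgreedy Strstar hStrstar
  have hbound : (∑ i, f i (Strstar ∪ S2 i)) ≤ (θ₂ - γ) / (1 - 1 / Real.exp 1) + γ := by
    have := (le_div_iff₀ he).2 (by linarith [hg] : ((∑ i, f i (Strstar ∪ S2 i)) - γ) * (1 - 1 / Real.exp 1) ≤ θ₂ - γ)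
    linarith
  linarith
end
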